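/- If probability distributions d₁*, d₂* on a finite set X both satisfy dᵢ* = (1/Zᵢ) d_ref · exp(rᵢ/β) and induce the same Bradley-Terry preference probabilities σ(r₁(x) - r₁(y)) = σ(r₂(x) - r₂(y)) for all x, y ∈ X, then r₁ - r₂ is a constant function, and consequently d₁* = d₂*. -/

import Mathlib

noncomputable def sigmoid (x : ℝ) : ℝ := 1 / (1 + Real.exp (-x))

lemma sigmoid_inj : Function.Injective sigmoid := by
  intro a b h
  unfold sigmoid at h
  have ha : (0:ℝ) < 1 + Real.exp (-a) := by positivity
  have hb : (0:ℝ) < 1 + Real.exp (-b) := by positivity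
  field_simp at h
  have := Real.exp_injective (add_left_cancel h); linarith

theorem bt_equivalent_rewards_same_occupancy {X : Type*} [Fintype X]
    (dref : X → ℝ) (hpos : ∀ x, 0 < dref x)
    (r₁ r₂ : X → ℝ) (β : ℝ) (hβ : 0 < β)
    (Z₁ Z₂ : ℝ)
    (hZ₁ : Z₁ = ∑ x, dref x * Real.exp (r₁ x / β))
    (hZ₂ : Z₂ = ∑ x, dref x * Real.exp (r₂ x / β))
    (d₁ d₂ : X → ℝ)
    (hd₁ : ∀ x, d₁ x = dref x * Real.exp (r₁ x / β) / Z₁)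
    (hd₂ : ∀ x, d₂ x = dref x * Real.exp (r₂ x / β) / Z₂)
    (hbt : ∀ x y, sigmoid (r₁ x - r₁ y) = sigmoid (r₂ x - r₂ y)) :
    (∃ c : ℝ, ∀ x, r₁ x - r₂ x = c) ∧ d₁ = d₂ := by
  have hdiff : ∀ x y, r₁ x - r₁ y = r₂ x - r₂ y := fun x y => sigmoid_inj (hbt x y)
  by_cases hne : Nonempty X
  · obtain ⟨x₀⟩ := hne
    have hc : ∀ x, r₁ x - r₂ x = r₁ x₀ - r₂ x₀ := fun x => by
      have := hdiff x x₀; linarith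
    refine ⟨⟨r₁ x₀ - r₂ x₀, hc⟩, ?_⟩
    set c := r₁ x₀ - r₂ x₀
    have hr : ∀ x, r₁ x = r₂ x + c := fun x => by have := hc x; linarith
    have hexp : ∀ x, Real.exp (r₁ x / β) = Real.exp (c / β) * Real.exp (r₂ x / β) := by
      intro x
      rw [← Real.exp_add, hr x]
      ring_nf
    have hZ : Z₁ = Real.exp (c / β) * Z₂ := by
      rw [hZ₁, hZ₂, Finset.mul_sum]
      exact Finset.sum_congr rfl fun x _ => by rw [hexp x]; ring
    have hZ₂pos : 0 < Z₂ := by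
      rw [hZ₂]
      exact Finset.sum_pos (fun x _ => mul_pos (hpos x) (Real.exp_pos _)) ⟨x₀, Finset.mem_univ x₀⟩
    funext x
    rw [hd₁ x, hd₂ x, hexp x, hZ]
    have he : Real.exp (c / β) ≠ 0 := Real.exp_ne_zero _
    field_simp
  · exact ⟨⟨0, fun x => absurd ⟨x⟩ hne⟩, funext fun x => absurd ⟨x⟩ hne⟩
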